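/- Let v be a K-valuation on L, A a subring of L containing K, and V a K-vector space with A ⊆ V ⊆ L. If V = Au₁ + ⋯ + A u_d for some u₁,…,u_d ∈ V (i.e. V is generated by d elements as an A-module), then the quotient monoid v(V*)/v(A*) has cardinality at most d. -/

import Mathlib

section aux

variable {L Γ : Type*} [Field L] [AddCommGroup Γ] [LinearOrder Γ] [IsOrderedAddMonoid Γ]
variable (v : L → WithTop Γ)
variable (hv0 : ∀ f : L, v f = ⊤ ↔ f = 0)
variable (hvmul : ∀ f g : L, v (f * g) = v f + v g)
variable (hvadd : ∀ f g : L, min (v f) (v g) ≤ v (f + g))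

include hv0 hvmul in
lemma vone : v 1 = 0 := by
  have h := hvmul 1 1
  rw [one_mul] at h
  have hne : v 1 ≠ ⊤ := by simp [hv0]
  lift v 1 to Γ using hne with a
  have h2 : a = a + a := by exact_mod_cast h
  have ha : a = 0 := left_eq_add.mp h2
  simp [ha]

include hv0 hvmul in
lemma vneg (g : L) : v (-g) = v g := by
  have hm : v (-1 : L) = 0 := by
    have h := hvmul (-1 : L) (-1)
    rw [neg_one_mul, neg_neg, vone v hv0 hvmul] at h
    have hne : v (-1 : L) ≠ ⊤ := by simp [hv0]
    lift v (-1 : L) to Γ using hne with a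
    have h2 : a + a = (0:Γ) := by exact_mod_cast h.symm
    have ha : a = 0 := by
      by_contra hne0
      rcases lt_or_gt_of_ne hne0 with hl | hg
      · exact absurd h2 (ne_of_lt (by calc a + a < 0 + 0 := add_lt_add hl hl
                                        _ = 0 := by simp))
      · exact absurd h2 (ne_of_gt (by calc (0:Γ) = 0 + 0 := by simp
                                        _ < a + a := add_lt_add hg hg))
    simp [ha]
  calc v (-g) = v ((-1) * g) := by ring_nf
  _ = v (-1) + v g := hvmul _ _
  _ = v g := by rw [hm]; simp

include hv0 hvmul hvadd in
lemma vadd_eq {f g : L} (h : v f < v g) : v (f + g) = v f := by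
  have h1 : v f ≤ v (f + g) := le_trans (by simp [le_of_lt h]) (hvadd f g)
  rcases eq_or_lt_of_le h1 with he | hlt
  · exact he.symm
  · exfalso
    have h2 := hvadd (f + g) (-g)
    rw [add_neg_cancel_right, vneg v hv0 hvmul] at h2
    have : v f < min (v (f + g)) (v g) := lt_min hlt h
    exact absurd h2 (not_le.mpr this)

include hvadd hv0 in
lemma vsum_le {ι : Type*} (m : WithTop Γ) (s : Finset ι) (f : ι → L)
    (h : ∀ k ∈ s, m ≤ v (f k)) : m ≤ v (∑ k ∈ s, f k) := by
  classical
  induction s using Finset.induction with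
  | empty => simp [(hv0 0).mpr rfl]
  | @insert a s hx ih =>
    rw [Finset.sum_insert hx]
    refine le_trans (le_min (h a (by simp)) (ih fun k hk => h k (by simp [hk]))) (hvadd _ _)

end aux

/-- Lemma 2.2: if `V = Au₁ + ⋯ + Au_d`, then the quotient monoid `v(V*)/v(A*)` has
cardinality at most `d`: there are `d` nonzero elements of `V` such that the value of any
nonzero element of `V` is equivalent (mod `v(A*)`) to the value of one of them. -/
theorem stmt2 {K L Γ : Type*} [Field K] [Field L] [Algebra K L]
    [AddCommGroup Γ] [LinearOrder Γ] [IsOrderedAddMonoid Γ]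
    (v : L → WithTop Γ)
    (hv0 : ∀ f : L, v f = ⊤ ↔ f = 0)
    (hvmul : ∀ f g : L, v (f * g) = v f + v g)
    (hvadd : ∀ f g : L, min (v f) (v g) ≤ v (f + g))
    (hvres : ∀ f g : L, v f = v g → v f ≠ ⊤ →
      ∃! lam : K, v f < v (f + algebraMap K L lam * g))
    (A : Subring L) (hKA : Set.range (algebraMap K L) ⊆ A)
    (V : Submodule K L) (hAV : (A : Set L) ⊆ V)
    (d : ℕ) (hd : 0 < d) (u : Fin d → L) (hu : ∀ i, u i ∈ V)
    (hgen : ∀ x ∈ V, ∃ a : Fin d → L, (∀ i, a i ∈ A) ∧ x = ∑ i, a i * u i)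
    (rel : WithTop Γ → WithTop Γ → Prop)
    (hrel : ∀ γ₁ γ₂, rel γ₁ γ₂ ↔ ∃ a₁ ∈ A, ∃ a₂ ∈ A, a₁ ≠ 0 ∧ a₂ ≠ 0 ∧
      γ₁ + v a₁ = γ₂ + v a₂) :
    ∃ reps : Fin d → L, (∀ i, reps i ∈ V ∧ reps i ≠ 0) ∧
      ∀ x ∈ V, x ≠ 0 → ∃ i, rel (v x) (v (reps i)) := by
  classical
  have h1A : (1 : L) ∈ A := A.one_mem
  have h1V : (1 : L) ∈ V := hAV h1A
  have hrefl : ∀ γ, rel γ γ := fun γ =>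
    (hrel γ γ).mpr ⟨1, h1A, 1, h1A, one_ne_zero, one_ne_zero, rfl⟩
  have hsymm : ∀ γ₁ γ₂, rel γ₁ γ₂ → rel γ₂ γ₁ := by
    intro γ₁ γ₂ h
    rcases (hrel γ₁ γ₂).mp h with ⟨a₁, ha₁, a₂, ha₂, hn₁, hn₂, he⟩
    exact (hrel γ₂ γ₁).mpr ⟨a₂, ha₂, a₁, ha₁, hn₂, hn₁, he.symm⟩
  -- Key step: there is no family of `d+1` pairwise non-related nonzero elements of `V`.
  have key : ∀ x : Fin (d + 1) → L, (∀ k, x k ∈ V) → (∀ k, x k ≠ 0) →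
      (∀ j k, j ≠ k → ¬ rel (v (x j)) (v (x k))) → False := by
    intro x hxV hx0 hpair
    have hind : LinearIndependent A x := by
      rw [Fintype.linearIndependent_iff]
      intro g hg
      by_contra hne
      push_neg at hne
      obtain ⟨j, hj⟩ := hne
      set f : Fin (d + 1) → L := fun k => (g k : L) * x k with hf
      have hsum : ∑ k, f k = 0 := by
        have hsm : ∀ k, g k • x k = (g k : L) * x k := fun k => rfl
        simpa [hf, hsm] using hg
      have hgjL : (g j : L) ≠ 0 := by
        simpa using hj
      have hfj : f j ≠ 0 := mul_ne_zero hgjL (hx0 j)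
      obtain ⟨j₀, -, hj₀⟩ := Finset.exists_min_image Finset.univ (fun k => v (f k))
        ⟨j, Finset.mem_univ j⟩
      have hj₀top : v (f j₀) ≠ ⊤ := by
        intro htop
        have h1 : v (f j₀) ≤ v (f j) := hj₀ j (Finset.mem_univ j)
        rw [htop, top_le_iff] at h1
        exact hfj ((hv0 _).mp h1)
      by_cases hcase : ∀ k, k ≠ j₀ → v (f j₀) < v (f k)
      · have hne' : (Finset.univ.erase j₀ : Finset (Fin (d + 1))).Nonempty := by
          rw [← Finset.card_pos, Finset.card_erase_of_mem (Finset.mem_univ j₀),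
            Finset.card_univ, Fintype.card_fin]
          omega
        obtain ⟨k₁, hk₁mem, hk₁⟩ := Finset.exists_min_image _ (fun k => v (f k)) hne'
        have hrest : v (f j₀) < v (∑ k ∈ Finset.univ.erase j₀, f k) :=
          lt_of_lt_of_le (hcase k₁ (Finset.ne_of_mem_erase hk₁mem))
            (vsum_le v hv0 hvadd _ _ f hk₁)
        have heq : v (∑ k, f k) = v (f j₀) := by
          rw [← Finset.add_sum_erase _ f (Finset.mem_univ j₀)]
          exact vadd_eq v hv0 hvmul hvadd hrest
        rw [hsum, (hv0 0).mpr rfl] at heq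
        exact hj₀top heq.symm
      · push_neg at hcase
        obtain ⟨k, hkne, hkle⟩ := hcase
        have heq : v (f k) = v (f j₀) := le_antisymm hkle (hj₀ k (Finset.mem_univ k))
        have hfk : f k ≠ 0 := by
          intro h0
          rw [h0, (hv0 0).mpr rfl] at heq
          exact hj₀top heq.symm
        have hgk : (g k : L) ≠ 0 := fun h => hfk (by simp [hf, h])
        have hgj₀ : (g j₀ : L) ≠ 0 := by
          intro h
          exact hj₀top ((hv0 _).mpr (by simp [hf, h]))
        refine hpair k j₀ hkne ((hrel _ _).mpr
          ⟨(g k : L), (g k).2, (g j₀ : L), (g j₀).2, hgk, hgj₀, ?_⟩)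
        have h1 : v (f k) = v (g k : L) + v (x k) := hvmul _ _
        have h2 : v (f j₀) = v (g j₀ : L) + v (x j₀) := hvmul _ _
        rw [h1, h2] at heq
        rw [add_comm (v (x k)), add_comm (v (x j₀))]
        exact heq
    have hspan : Set.range x ≤ Submodule.span A (Set.range u) := by
      rintro - ⟨k, rfl⟩
      obtain ⟨a, ha, hxe⟩ := hgen (x k) (hxV k)
      rw [hxe]
      refine Submodule.sum_mem _ fun i _ => ?_
      have : a i * u i = (⟨a i, ha i⟩ : A) • u i := rfl
      rw [this]
      exact Submodule.smul_mem _ _ (Submodule.subset_span (Set.mem_range_self i))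
    have hcard1 := linearIndependent_le_span_aux' x hind (Set.range u) hspan
    have hcard2 : Fintype.card (Set.range u) ≤ d := by
      simpa using Fintype.card_range_le u
    simp only [Fintype.card_fin] at hcard1
    omega
  -- Good finsets: nonzero elements of `V`, pairwise non-related values.
  set P : Finset L → Prop := fun T => (∀ y ∈ T, y ∈ V ∧ y ≠ 0) ∧
      (∀ y ∈ T, ∀ z ∈ T, y ≠ z → ¬ rel (v y) (v z)) with hP
  have hcard : ∀ T, P T → T.card ≤ d := by
    intro T hT
    by_contra hgt
    push_neg at hgt
    obtain ⟨T', hT'sub, hT'card⟩ := Finset.exists_subset_card_eq hgt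
    let e := T'.equivFinOfCardEq hT'card
    refine key (fun k => ((e.symm k : T') : L)) (fun k => (hT.1 _ (hT'sub (e.symm k).2)).1)
      (fun k => (hT.1 _ (hT'sub (e.symm k).2)).2) ?_
    intro a b hab
    refine hT.2 _ (hT'sub (e.symm a).2) _ (hT'sub (e.symm b).2) ?_
    intro hcoe
    exact hab (e.symm.injective (Subtype.coe_injective hcoe))
  have hPone : P {1} := by
    constructor
    · intro y hy
      rw [Finset.mem_singleton] at hy
      subst hy
      exact ⟨h1V, one_ne_zero⟩
    · intro y hy z hz hyz
      rw [Finset.mem_singleton] at hy hz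
      exact absurd (hy.trans hz.symm) hyz
  set Q : ℕ → Prop := fun n => ∃ T, P T ∧ T.card = n with hQ
  have hQ1 : Q 1 := ⟨{1}, hPone, Finset.card_singleton 1⟩
  set n := Nat.findGreatest Q d with hn
  have hQn : Q n := Nat.findGreatest_spec hd hQ1
  have hn1 : 1 ≤ n := Nat.le_findGreatest hd hQ1
  obtain ⟨T, hPT, hTcard⟩ := hQn
  -- maximality: every nonzero element of V is related to something in T
  have hmax : ∀ x ∈ V, x ≠ 0 → ∃ y ∈ T, rel (v x) (v y) := by
    intro x hxV hx0
    by_contra hno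
    push_neg at hno
    have hxT : x ∉ T := fun hxT => hno x hxT (hrefl (v x))
    have hPins : P (insert x T) := by
      constructor
      · intro y hy
        rw [Finset.mem_insert] at hy
        rcases hy with rfl | hy
        · exact ⟨hxV, hx0⟩
        · exact hPT.1 y hy
      · intro y hy z hz hyz
        rw [Finset.mem_insert] at hy hz
        rcases hy with rfl | hy <;> rcases hz with rfl | hz
        · exact absurd rfl hyz
        · exact hno z hz
        · exact fun h => hno y hy (hsymm _ _ h)
        · exact hPT.2 y hy z hz hyz
    have hinscard : (insert x T).card = n + 1 := by
      rw [Finset.card_insert_of_notMem hxT, hTcard]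
    have hle : n + 1 ≤ d := hinscard ▸ hcard _ hPins
    exact Nat.findGreatest_is_greatest (P := Q) (Nat.lt_succ_self n) hle
      ⟨insert x T, hPins, hinscard⟩
  -- build reps from T, padding with an element of T
  have hTne : T.Nonempty := Finset.card_pos.mp (by omega)
  obtain ⟨t₀, ht₀⟩ := hTne
  have hlen : T.toList.length = n := by rw [Finset.length_toList, hTcard]
  set reps : Fin d → L := fun i => T.toList.getD i.val t₀ with hreps
  have hmemT : ∀ i, reps i ∈ T := by
    intro i
    by_cases h : i.val < T.toList.length
    · rw [hreps]
      simp only [List.getD_eq_getElem _ _ h]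
      exact Finset.mem_toList.mp (List.getElem_mem h)
    · rw [hreps]
      simp only [List.getD_eq_default _ _ (le_of_not_gt h)]
      exact ht₀
  refine ⟨reps, fun i => hPT.1 _ (hmemT i), ?_⟩
  intro x hxV hx0
  obtain ⟨y, hyT, hrely⟩ := hmax x hxV hx0
  have hymem : y ∈ T.toList := Finset.mem_toList.mpr hyT
  obtain ⟨j, hj, hjy⟩ := List.getElem_of_mem hymem
  have hnd : n ≤ d := hTcard ▸ hcard T hPT
  have hjd : j < d := by rw [hlen] at hj; omega
  refine ⟨⟨j, hjd⟩, ?_⟩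
  have : reps ⟨j, hjd⟩ = y := by
    show T.toList.getD j t₀ = y
    rw [List.getD_eq_getElem _ _ hj]
    exact hjy
  rw [this]
  exact hrely
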